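/- Let v₀, w_{m₀}, L₀ be real numbers with v₀ > w_{m₀} > 0 and L₀ ≥ 0, and let γ* > 0 be the unique positive real number satisfying v₀·exp(−(γ*)²) = L₀·(γ*)² + w_{m₀}. Define s(t) := 2·γ*·√t for t ≥ 0 and, for 0 ≤ z ≤ s(t), t > 0, w(z,t) := 2·v₀·√t·exp(−z²/(4t)) + v₀·z·√π·erf(z/(2√t)) − L₀·z·γ* − v₀·z·√π·erf(γ*). Then for all t > 0: (i) ∂²w/∂z²(z,t) = ∂w/∂t(z,t) for all 0 < z < s(t); (ii) ∂w/∂z(s(t),t) = −L₀·√t·s'(t); (iii) w(s(t),t) = 2·w_{m₀}·√t; (iv) w(0,t) = 2·v₀·√t; and (v) s(0) = 0. -/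

import Mathlib

open Real MeasureTheory Set

noncomputable section

/-- The error function `erf x = (2/√π) ∫₀ˣ exp(−u²) du`. -/
def erf (x : ℝ) : ℝ := (2 / Real.sqrt π) * ∫ u in (0:ℝ)..x, Real.exp (-u ^ 2)

/-- Partial derivative in the first (space) variable. -/
def pz (f : ℝ → ℝ → ℝ) (z t : ℝ) : ℝ := deriv (fun z' => f z' t) z

/-- Partial derivative in the second (time) variable. -/
def pt (f : ℝ → ℝ → ℝ) (z t : ℝ) : ℝ := deriv (fun t' => f z t') t

/-- Second partial derivative in the first (space) variable. -/
def pzz (f : ℝ → ℝ → ℝ) (z t : ℝ) : ℝ := deriv (fun z' => pz f z' t) z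

lemma hasDerivAt_erf (x : ℝ) :
    HasDerivAt erf ((2 / Real.sqrt π) * Real.exp (-x ^ 2)) x := by
  have hc : Continuous fun u : ℝ => Real.exp (-u ^ 2) := by continuity
  exact ((hc.integral_hasStrictDerivAt 0 x).hasDerivAt).const_mul (2 / Real.sqrt π)

lemma erf_zero : erf 0 = 0 := by simp [erf]

lemma hWz (v₀ L₀ γ : ℝ) {t : ℝ} (ht : 0 < t) (z : ℝ) :
    HasDerivAt (fun z' => 2 * v₀ * Real.sqrt t * Real.exp (-z' ^ 2 / (4 * t)) +
        v₀ * z' * Real.sqrt π * erf (z' / (2 * Real.sqrt t)) -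
        L₀ * z' * γ - v₀ * z' * Real.sqrt π * erf γ)
      (v₀ * Real.sqrt π * erf (z / (2 * Real.sqrt t)) - L₀ * γ - v₀ * Real.sqrt π * erf γ) z := by
  have hst : 0 < Real.sqrt t := Real.sqrt_pos.2 ht
  have hst2 : Real.sqrt t * Real.sqrt t = t := Real.mul_self_sqrt ht.le
  have hπ : 0 < Real.sqrt π := Real.sqrt_pos.2 Real.pi_pos
  have h1 : HasDerivAt (fun z' : ℝ => -z' ^ 2 / (4 * t)) (-(2 * z) / (4 * t)) z := by
    simpa using ((hasDerivAt_pow 2 z).neg.div_const (4 * t))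
  have hA : HasDerivAt (fun z' : ℝ => 2 * v₀ * Real.sqrt t * Real.exp (-z' ^ 2 / (4 * t)))
      (2 * v₀ * Real.sqrt t * (Real.exp (-z ^ 2 / (4 * t)) * (-(2 * z) / (4 * t)))) z :=
    h1.exp.const_mul _
  have hg : HasDerivAt (fun z' : ℝ => z' / (2 * Real.sqrt t)) (1 / (2 * Real.sqrt t)) z := by
    simpa using (hasDerivAt_id z).div_const (2 * Real.sqrt t)
  have herf : HasDerivAt (fun z' : ℝ => erf (z' / (2 * Real.sqrt t)))
      ((2 / Real.sqrt π * Real.exp (-(z / (2 * Real.sqrt t)) ^ 2)) * (1 / (2 * Real.sqrt t))) z :=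
    (hasDerivAt_erf _).comp z hg
  have hlin : HasDerivAt (fun z' : ℝ => v₀ * z' * Real.sqrt π) (v₀ * Real.sqrt π) z := by
    simpa using (((hasDerivAt_id z).const_mul v₀).mul_const (Real.sqrt π))
  have hB := hlin.mul herf
  have hC : HasDerivAt (fun z' : ℝ => L₀ * z' * γ) (L₀ * γ) z := by
    simpa using (((hasDerivAt_id z).const_mul L₀).mul_const γ)
  have hD : HasDerivAt (fun z' : ℝ => v₀ * z' * Real.sqrt π * erf γ) (v₀ * Real.sqrt π * erf γ) z := by
    simpa using hlin.mul_const (erf γ)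
  have htot := ((hA.add hB).sub hC).sub hD
  refine htot.congr_deriv ?_
  have hE : Real.exp (-(z / (2 * Real.sqrt t)) ^ 2) = Real.exp (-z ^ 2 / (4 * t)) := by
    congr 1
    rw [div_pow, mul_pow, Real.sq_sqrt ht.le]
    ring_nf
  rw [hE]
  have hπ2 : Real.sqrt π ≠ 0 := hπ.ne'
  set a := Real.sqrt t with ha
  have hta : t = a * a := hst2.symm
  rw [hta]
  field_simp
  ring

lemma hWt (v₀ L₀ γ : ℝ) {t : ℝ} (ht : 0 < t) (z : ℝ) :
    HasDerivAt (fun t' => 2 * v₀ * Real.sqrt t' * Real.exp (-z ^ 2 / (4 * t')) +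
        v₀ * z * Real.sqrt π * erf (z / (2 * Real.sqrt t')) -
        L₀ * z * γ - v₀ * z * Real.sqrt π * erf γ)
      (v₀ * Real.exp (-z ^ 2 / (4 * t)) / Real.sqrt t) t := by
  have hst : 0 < Real.sqrt t := Real.sqrt_pos.2 ht
  have hst2 : Real.sqrt t * Real.sqrt t = t := Real.mul_self_sqrt ht.le
  have hπ2 : Real.sqrt π ≠ 0 := (Real.sqrt_pos.2 Real.pi_pos).ne'
  have hsq : HasDerivAt Real.sqrt (1 / (2 * Real.sqrt t)) t := Real.hasDerivAt_sqrt ht.ne'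
  have hA1 : HasDerivAt (fun t' : ℝ => 2 * v₀ * Real.sqrt t') (2 * v₀ * (1 / (2 * Real.sqrt t))) t := by
    simpa using hsq.const_mul (2 * v₀)
  have hden : HasDerivAt (fun t' : ℝ => 4 * t') 4 t := by
    simpa using (hasDerivAt_id t).const_mul 4
  have hE1 : HasDerivAt (fun t' : ℝ => -z ^ 2 / (4 * t'))
      ((0 * (4 * t) - (-z ^ 2) * 4) / (4 * t) ^ 2) t :=
    (hasDerivAt_const t (-z ^ 2)).div hden (by positivity)
  have hA := hA1.mul hE1.exp
  have hden2 : HasDerivAt (fun t' : ℝ => 2 * Real.sqrt t') (2 * (1 / (2 * Real.sqrt t))) t :=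
    hsq.const_mul 2
  have hg1 : HasDerivAt (fun t' : ℝ => z / (2 * Real.sqrt t'))
      ((0 * (2 * Real.sqrt t) - z * (2 * (1 / (2 * Real.sqrt t)))) / (2 * Real.sqrt t) ^ 2) t :=
    (hasDerivAt_const t z).div hden2 (by positivity)
  have herf := ((hasDerivAt_erf (z / (2 * Real.sqrt t))).comp t hg1).const_mul (v₀ * z * Real.sqrt π)
  have hC := hasDerivAt_const t (L₀ * z * γ)
  have hD := hasDerivAt_const t (v₀ * z * Real.sqrt π * erf γ)
  have htot := ((hA.add herf).sub hC).sub hD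
  refine htot.congr_deriv ?_
  have hE : Real.exp (-(z / (2 * Real.sqrt t)) ^ 2) = Real.exp (-z ^ 2 / (4 * t)) := by
    congr 1
    rw [div_pow, mul_pow, Real.sq_sqrt ht.le]
    ring_nf
  rw [hE]
  set a := Real.sqrt t with ha
  have hta : t = a * a := hst2.symm
  rw [hta]
  field_simp
  ring

/-- the explicit similarity solution of the Stefan problem with
Dirichlet condition. -/
theorem statement10 (v₀ wm₀ L₀ : ℝ) (h1 : wm₀ < v₀) (h2 : 0 < wm₀) (h3 : 0 ≤ L₀)
    (γ : ℝ) (hγ_pos : 0 < γ)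
    (hγ : v₀ * Real.exp (-γ ^ 2) = L₀ * γ ^ 2 + wm₀)
    (hγ_uniq : ∀ γ' : ℝ, 0 < γ' → v₀ * Real.exp (-γ' ^ 2) = L₀ * γ' ^ 2 + wm₀ → γ' = γ)
    (s : ℝ → ℝ) (hs : ∀ t, s t = 2 * γ * Real.sqrt t)
    (w : ℝ → ℝ → ℝ)
    (hw : ∀ t > 0, ∀ z : ℝ,
      w z t = 2 * v₀ * Real.sqrt t * Real.exp (-z ^ 2 / (4 * t)) +
        v₀ * z * Real.sqrt π * erf (z / (2 * Real.sqrt t)) -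
        L₀ * z * γ - v₀ * z * Real.sqrt π * erf γ) :
    (∀ t > 0,
      (∀ z, 0 < z → z < s t → pzz w z t = pt w z t) ∧
      pz w (s t) t = -L₀ * Real.sqrt t * deriv s t ∧
      w (s t) t = 2 * wm₀ * Real.sqrt t ∧
      w 0 t = 2 * v₀ * Real.sqrt t) ∧
    s 0 = 0 := by
  constructor
  · intro t ht
    have hst : 0 < Real.sqrt t := Real.sqrt_pos.2 ht
    have hst2 : Real.sqrt t * Real.sqrt t = t := Real.mul_self_sqrt ht.le
    have hπ2 : Real.sqrt π ≠ 0 := (Real.sqrt_pos.2 Real.pi_pos).ne'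
    -- the function of z at fixed t
    have hfz : (fun z' => w z' t) = fun z' =>
        2 * v₀ * Real.sqrt t * Real.exp (-z' ^ 2 / (4 * t)) +
        v₀ * z' * Real.sqrt π * erf (z' / (2 * Real.sqrt t)) -
        L₀ * z' * γ - v₀ * z' * Real.sqrt π * erf γ := funext fun z' => hw t ht z'
    -- pz formula
    have hpz : ∀ z : ℝ, pz w z t =
        v₀ * Real.sqrt π * erf (z / (2 * Real.sqrt t)) - L₀ * γ - v₀ * Real.sqrt π * erf γ := by
      intro z
      unfold pz
      rw [hfz]
      exact (hWz v₀ L₀ γ ht z).deriv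
    refine ⟨?_, ?_, ?_, ?_⟩
    · -- heat equation
      intro z hz0 hzs
      -- pzz
      have hpzz : pzz w z t = v₀ * Real.exp (-z ^ 2 / (4 * t)) / Real.sqrt t := by
        unfold pzz
        have : (fun z' => pz w z' t) = fun z' =>
            v₀ * Real.sqrt π * erf (z' / (2 * Real.sqrt t)) - L₀ * γ -
              v₀ * Real.sqrt π * erf γ := funext fun z' => hpz z'
        rw [this]
        have hg : HasDerivAt (fun z' : ℝ => z' / (2 * Real.sqrt t)) (1 / (2 * Real.sqrt t)) z := by
          simpa using (hasDerivAt_id z).div_const (2 * Real.sqrt t)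
        have herf : HasDerivAt (fun z' : ℝ => erf (z' / (2 * Real.sqrt t)))
            ((2 / Real.sqrt π * Real.exp (-(z / (2 * Real.sqrt t)) ^ 2)) * (1 / (2 * Real.sqrt t))) z :=
          (hasDerivAt_erf _).comp z hg
        have h := ((herf.const_mul (v₀ * Real.sqrt π)).sub_const (L₀ * γ)).sub_const
          (v₀ * Real.sqrt π * erf γ)
        rw [h.deriv]
        have hE : Real.exp (-(z / (2 * Real.sqrt t)) ^ 2) = Real.exp (-z ^ 2 / (4 * t)) := by
          congr 1
          rw [div_pow, mul_pow, Real.sq_sqrt ht.le]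
          ring_nf
        rw [hE]
        field_simp
      have hptv : pt w z t = v₀ * Real.exp (-z ^ 2 / (4 * t)) / Real.sqrt t := by
        unfold pt
        have hev : (fun t' => w z t') =ᶠ[nhds t] fun t' =>
            2 * v₀ * Real.sqrt t' * Real.exp (-z ^ 2 / (4 * t')) +
            v₀ * z * Real.sqrt π * erf (z / (2 * Real.sqrt t')) -
            L₀ * z * γ - v₀ * z * Real.sqrt π * erf γ := by
          filter_upwards [Ioi_mem_nhds ht] with t' ht' using hw t' ht' z
        rw [hev.deriv_eq]
        exact (hWt v₀ L₀ γ ht z).deriv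
      rw [hpzz, hptv]
    · -- Stefan condition
      have hds : deriv s t = 2 * γ * (1 / (2 * Real.sqrt t)) := by
        have : s = fun t' => 2 * γ * Real.sqrt t' := funext hs
        rw [this]
        exact ((Real.hasDerivAt_sqrt ht.ne').const_mul (2 * γ)).deriv
      rw [hpz (s t), hds, hs t]
      have harg : 2 * γ * Real.sqrt t / (2 * Real.sqrt t) = γ := by
        field_simp
      rw [harg]
      field_simp
      ring
    · -- free boundary value
      rw [hw t ht, hs t]
      have hE : Real.exp (-(2 * γ * Real.sqrt t) ^ 2 / (4 * t)) = Real.exp (-γ ^ 2) := by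
        congr 1
        rw [mul_pow, mul_pow, Real.sq_sqrt ht.le]
        field_simp
        ring
      have harg : 2 * γ * Real.sqrt t / (2 * Real.sqrt t) = γ := by
        field_simp
      rw [hE, harg]
      linear_combination (2 * Real.sqrt t) * hγ
    · -- z = 0 value
      rw [hw t ht]
      simp [erf_zero]
  · rw [hs 0]
    simp

end
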